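/- Let i ∈ {1,…,m}, let x, x_* ∈ ℂⁿ satisfy A_{i,:} x_* = b_i, let α ∈ ℝ, and set h = (b_i − A_{i,:} x)/‖A_{i,:}‖₂². Then ‖x − x_* + α·h·(A_{i,:})ᴴ‖₂² = ‖x − x_*‖₂² + (α² − 2α)·ψ_i(x). -/

import Mathlib

open Matrix Finset

noncomputable section

/-- Squared Euclidean norm `‖v‖₂²` of a complex vector. -/
def vecNormSq {k : ℕ} (v : Fin k → ℂ) : ℝ := ∑ i, ‖v i‖ ^ 2

variable {m n : ℕ}

/-- Squared Euclidean norm `‖A_{i,:}‖₂²` of the `i`-th row of `A`. -/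
def rowNormSq (A : Matrix (Fin m) (Fin n) ℂ) (i : Fin m) : ℝ := ∑ j, ‖A i j‖ ^ 2

/-- Squared Frobenius norm `‖A‖_F²`. -/
def frobSq (A : Matrix (Fin m) (Fin n) ℂ) : ℝ := ∑ i, ∑ j, ‖A i j‖ ^ 2

/-- `ψ_i(x) = |b_i − A_{i,:} x|² / ‖A_{i,:}‖₂²`. -/
def psi (A : Matrix (Fin m) (Fin n) ℂ) (b : Fin m → ℂ) (x : Fin n → ℂ) (i : Fin m) : ℝ :=
  ‖b i - A.mulVec x i‖ ^ 2 / rowNormSq A i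

/-- `max_{i ∈ [m]} ψ_i(x)`. -/
def psiMax (A : Matrix (Fin m) (Fin n) ℂ) (b : Fin m → ℂ) (x : Fin n → ℂ) : ℝ :=
  ⨆ i, psi A b x i

/-- The row submatrix `A_{S,:}` of `A`, realized by replacing the rows outside `S` with zero
(which changes neither the Frobenius norm nor the largest singular value). -/
def rowSub (A : Matrix (Fin m) (Fin n) ℂ) (S : Finset (Fin m)) : Matrix (Fin m) (Fin n) ℂ :=
  fun i j => if i ∈ S then A i j else 0

/-- `σ_r(A)²` : the smallest nonzero eigenvalue of `AᴴA`. -/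
def sigmaRSq (A : Matrix (Fin m) (Fin n) ℂ) : ℝ :=
  sInf {μ : ℝ | μ ≠ 0 ∧ ∃ i, (Matrix.isHermitian_conjTranspose_mul_self A).eigenvalues i = μ}

/-- `σ₁(M)²` : the largest eigenvalue of `MᴴM`, i.e. the largest singular value squared. -/
def sigma1Sq {k : Type*} [Fintype k] (M : Matrix k (Fin n) ℂ) : ℝ :=
  ⨆ i, (Matrix.isHermitian_conjTranspose_mul_self M).eigenvalues i

/-- `Û(x) = {i ∈ [m] : ψ_i(x) ≠ 0}`. -/
def Uhat (A : Matrix (Fin m) (Fin n) ℂ) (b : Fin m → ℂ) (x : Fin n → ℂ) : Finset (Fin m) :=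
  Finset.univ.filter fun i => psi A b x i ≠ 0

/-- The greedy index set `U(x)` with relaxation parameter `θ = 1/2`. -/
def Ugreedy (A : Matrix (Fin m) (Fin n) ℂ) (b : Fin m → ℂ) (x : Fin n → ℂ) : Finset (Fin m) :=
  Finset.univ.filter fun i =>
    (1 / 2) * psiMax A b x + (1 / 2) * (vecNormSq (b - A.mulVec x) / frobSq A) ≤ psi A b x i

/-- `η(x) = Σ_{i ∈ U(x)} (b_i − A_{i,:}x) e_i`. -/
def eta (A : Matrix (Fin m) (Fin n) ℂ) (b : Fin m → ℂ) (x : Fin n → ℂ) : Fin m → ℂ :=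
  fun i => if i ∈ Ugreedy A b x then b i - A.mulVec x i else 0

/-- `uᴴ v`, the conjugate dot product. -/
def dotc {k : ℕ} (u v : Fin k → ℂ) : ℂ := ∑ i, (starRingEnd ℂ) (u i) * v i

/-- `φ(x, η) = |ηᴴ(b − A x)|² / ‖Aᴴ η‖₂²`. -/
def phi (A : Matrix (Fin m) (Fin n) ℂ) (b : Fin m → ℂ) (x : Fin n → ℂ) (η : Fin m → ℂ) : ℝ :=
  ‖dotc η (b - A.mulVec x)‖ ^ 2 / vecNormSq (Aᴴ.mulVec η)

end

/-- relaxed Kaczmarz one-step identity: if `A_{i,:} x_* = b_i` and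
`h = (b_i − A_{i,:}x)/‖A_{i,:}‖₂²`, then
`‖x − x_* + α h (A_{i,:})ᴴ‖₂² = ‖x − x_*‖₂² + (α² − 2α) ψ_i(x)`. -/
theorem stmt15 {m n : ℕ} (A : Matrix (Fin m) (Fin n) ℂ) (b : Fin m → ℂ)
    (hA : ∀ i, A i ≠ 0) (i : Fin m) (x xs : Fin n → ℂ)
    (hxs : A.mulVec xs i = b i) (α : ℝ) :
    vecNormSq (x - xs +
        ((α : ℂ) * ((b i - A.mulVec x i) / (rowNormSq A i : ℂ))) • star (A i)) =
      vecNormSq (x - xs) + (α ^ 2 - 2 * α) * psi A b x i := by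
  classical
  set d : ℂ := b i - A.mulVec x i with hd
  set r : ℝ := rowNormSq A i with hrdef
  have hr : r ≠ 0 := by
    intro h0
    apply hA i
    funext j
    have hrz : ∑ j, ‖A i j‖ ^ 2 = 0 := h0
    have hj := (Finset.sum_eq_zero_iff_of_nonneg (fun j _ => by positivity)).mp hrz
      j (Finset.mem_univ j)
    have : ‖A i j‖ = 0 := by nlinarith [norm_nonneg (A i j)]
    simpa using this
  set c : ℂ := (α : ℂ) * (d / (r : ℂ)) with hc
  have expand : ∀ j : Fin n,
      ‖(x - xs + c • star (A i)) j‖ ^ 2 =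
        ‖(x - xs) j‖ ^ 2 + Complex.normSq c * ‖A i j‖ ^ 2 +
          2 * ((x j - xs j) * ((starRingEnd ℂ) c * A i j)).re := by
    intro j
    have h1 : (x - xs + c • star (A i)) j = (x j - xs j) + c * (starRingEnd ℂ) (A i j) := rfl
    rw [h1]
    simp only [Pi.sub_apply, Complex.sq_norm]
    rw [Complex.normSq_add,
      show Complex.normSq (c * (starRingEnd ℂ) (A i j))
          = Complex.normSq c * Complex.normSq (A i j) from by
        rw [Complex.normSq_mul, Complex.normSq_conj],
      show (starRingEnd ℂ) (c * (starRingEnd ℂ) (A i j)) = (starRingEnd ℂ) c * A i j from by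
        rw [_root_.map_mul, Complex.conj_conj]]
  unfold vecNormSq
  rw [Finset.sum_congr rfl fun j _ => expand j]
  rw [Finset.sum_add_distrib, Finset.sum_add_distrib]
  have hsum2 : ∑ j, Complex.normSq c * ‖A i j‖ ^ 2 = Complex.normSq c * r := by
    rw [← Finset.mul_sum]; rfl
  have hkey : ∑ j, A i j * (x j - xs j) = -d := by
    have : ∑ j, A i j * (x j - xs j) = A.mulVec x i - A.mulVec xs i := by
      simp [Matrix.mulVec, dotProduct, mul_sub, Finset.sum_sub_distrib]
    rw [this, hxs, hd]; ring
  have hre : (starRingEnd ℂ) c * (-d) = ((-(α * Complex.normSq d / r) : ℝ) : ℂ) := by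
    rw [hc, _root_.map_mul, map_div₀]
    simp only [Complex.conj_ofReal]
    rw [show (α : ℂ) * ((starRingEnd ℂ) d / (r : ℂ)) * (-d)
        = -((α : ℂ) * (d * (starRingEnd ℂ) d) / (r : ℂ)) by ring, Complex.mul_conj]
    push_cast
    ring
  have hsum3 : ∑ j, 2 * ((x j - xs j) * ((starRingEnd ℂ) c * A i j)).re
      = 2 * (-(α * Complex.normSq d / r)) := by
    rw [← Finset.mul_sum, ← Complex.re_sum]
    congr 1
    have : ∑ j, (x j - xs j) * ((starRingEnd ℂ) c * A i j)
        = (starRingEnd ℂ) c * (-d) := by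
      rw [← hkey, Finset.mul_sum]
      exact Finset.sum_congr rfl fun j _ => by ring
    rw [this, hre, Complex.ofReal_re]
  rw [hsum2, hsum3]
  have hcnormSq : Complex.normSq c = α ^ 2 * Complex.normSq d / r ^ 2 := by
    rw [hc, _root_.map_mul, map_div₀, Complex.normSq_ofReal, Complex.normSq_ofReal]
    field_simp
  rw [hcnormSq]
  have hpsi : psi A b x i = Complex.normSq d / r := by
    unfold psi
    rw [← hd, ← hrdef, Complex.sq_norm]
  rw [hpsi]
  field_simp
  ring
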